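/- For any pointed σ-structure (A,a) over a unimodal vocabulary and any k > 0, Hk-coalgebras α : (A,a) → Hk(A,a) are in bijective correspondence with generated tree covers of (A,a) of height at most k+1. -/

import Mathlib

/-- A pointed structure over a unimodal vocabulary: unary predicates indexed by `ι`,
one transition relation `E`, and a distinguished point. -/
structure PStr (ι : Type) where
  W : Type
  p : ι → W → Prop
  E : W → W → Prop
  pt : W

namespace PStr

variable {ι : Type}

/-- The universe of the hybrid comonad `Hk(A,a)`: nonempty plays of length ≤ k+1
starting at the distinguished point, in which every later element is seen (via `E`)
from some earlier element. -/
def Valid (A : PStr ι) (k : ℕ) (s : List A.W) : Prop :=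
  s ≠ [] ∧ s.head? = some A.pt ∧ s.length ≤ k + 1 ∧
    ∀ j : Fin s.length, 0 < (j : ℕ) →
      ∃ i : Fin s.length, (i : ℕ) < (j : ℕ) ∧ A.E (s.get i) (s.get j)

/-- The last element of a play (the counit ε). -/
def lastW (A : PStr ι) (s : List A.W) : A.W := s.getLast?.getD A.pt

/-- Lifting of a unary predicate to plays: it holds of the last element. -/
def liftP (A : PStr ι) (i : ι) (s : List A.W) : Prop := s ≠ [] ∧ A.p i (lastW A s)

/-- Lifting of the transition relation to plays: the plays are comparable in the
prefix order and `E` holds of their last elements. -/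
def liftE (A : PStr ι) (s t : List A.W) : Prop :=
  (s <+: t ∨ t <+: s) ∧ s ≠ [] ∧ t ≠ [] ∧ A.E (lastW A s) (lastW A t)

end PStr


namespace PStr

variable {ι : Type}

/-- A coalgebra `α : (A,a) → Hk(A,a)` for the hybrid comonad: a homomorphism of
pointed structures landing in valid plays, satisfying the counit and
comultiplication laws.  (Here `δ` sends a play to its list of nonempty prefixes and
`Hk α` acts by mapping `α` over a play, so the comultiplication law reads:
the `(j+1)`-st prefix of `α w` equals `α` of the `j`-th entry of `α w`.) -/
def IsCoalg (A : PStr ι) (k : ℕ) (α : A.W → List A.W) : Prop :=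
  (∀ w, Valid A k (α w)) ∧
  α A.pt = [A.pt] ∧
  (∀ i w, A.p i w → liftP A i (α w)) ∧
  (∀ w w', A.E w w' → liftE A (α w) (α w')) ∧
  (∀ w, lastW A (α w) = w) ∧
  (∀ w, ∀ j : Fin (α w).length, (α w).take ((j : ℕ) + 1) = α ((α w).get j))

/-- A generated tree cover of `(A,a)` of height ≤ n: a tree partial order on the
universe with least element the distinguished point, in which Gaifman-adjacent
elements are comparable, every non-root element is seen via `E` from a strictly
smaller element, and every chain has at most `n` elements. -/
def GenTreeCover (A : PStr ι) (r : A.W → A.W → Prop) (n : ℕ) : Prop :=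
  IsPartialOrder A.W r ∧
  (∀ x, r A.pt x) ∧
  (∀ x y z, r y x → r z x → (r y z ∨ r z y)) ∧
  (∀ x y, x ≠ y → (A.E x y ∨ A.E y x) → (r x y ∨ r y x)) ∧
  (∀ x, x ≠ A.pt → ∃ y, r y x ∧ y ≠ x ∧ A.E y x) ∧
  (∀ C : Set A.W, IsChain r C → C.encard ≤ (n : ℕ∞))




variable {W : Type}

/-- `l` enumerates `s` in strictly `r`-increasing order. -/
def Enum (r : W → W → Prop) (s : Set W) (l : List W) : Prop :=
  List.Pairwise (fun a b => r a b ∧ a ≠ b) l ∧ ∀ x, x ∈ l ↔ x ∈ s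

theorem Enum.nodup {r : W → W → Prop} {s : Set W} {l : List W} (h : Enum r s l) : l.Nodup :=
  h.1.imp (fun h => h.2)

theorem enum_unique {r : W → W → Prop} (hanti : ∀ x y, r x y → r y x → x = y) :
    ∀ {l₁ : List W} {s : Set W} {l₂ : List W}, Enum r s l₁ → Enum r s l₂ → l₁ = l₂ := by
  intro l₁
  induction l₁ with
  | nil =>
    intro s l₂ h1 h2
    cases l₂ with
    | nil => rfl
    | cons b t =>
      exact absurd ((h1.2 b).mpr ((h2.2 b).mp List.mem_cons_self)) List.not_mem_nil
  | cons a t ih =>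
    intro s l₂ h1 h2
    cases l₂ with
    | nil =>
      exact absurd ((h2.2 a).mpr ((h1.2 a).mp List.mem_cons_self)) List.not_mem_nil
    | cons b t₂ =>
      have hab : a = b := by
        have ha2 : a ∈ b :: t₂ := (h2.2 a).mpr ((h1.2 a).mp List.mem_cons_self)
        have hb1 : b ∈ a :: t := (h1.2 b).mpr ((h2.2 b).mp List.mem_cons_self)
        rcases List.mem_cons.mp ha2 with h | h
        · exact h
        rcases List.mem_cons.mp hb1 with h' | h'
        · exact h'.symm
        · have h2' := (List.pairwise_cons.mp h2.1).1 a h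
          have h1' := (List.pairwise_cons.mp h1.1).1 b h'
          exact hanti _ _ h1'.1 h2'.1
      subst hab
      have ht : t = t₂ := by
        refine ih (s := s \ {a}) ⟨(List.pairwise_cons.mp h1.1).2, ?_⟩
          ⟨(List.pairwise_cons.mp h2.1).2, ?_⟩
        · intro x
          constructor
          · intro hx
            refine ⟨(h1.2 x).mp (List.mem_cons_of_mem _ hx), ?_⟩
            have := (List.pairwise_cons.mp h1.1).1 x hx
            exact fun hxa => this.2 hxa.symm
          · intro ⟨hxs, hxa⟩
            rcases List.mem_cons.mp ((h1.2 x).mpr hxs) with h | h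
            · exact absurd h hxa
            · exact h
        · intro x
          constructor
          · intro hx
            refine ⟨(h2.2 x).mp (List.mem_cons_of_mem _ hx), ?_⟩
            have := (List.pairwise_cons.mp h2.1).1 x hx
            exact fun hxa => this.2 hxa.symm
          · intro ⟨hxs, hxa⟩
            rcases List.mem_cons.mp ((h2.2 x).mpr hxs) with h | h
            · exact absurd h hxa
            · exact h
      rw [ht]

theorem chain_exists_least {r : W → W → Prop} (href : ∀ x, r x x)
    (htrans : ∀ x y z, r x y → r y z → r x z) {s : Set W} (hs : s.Finite) :
    s.Nonempty → (∀ x ∈ s, ∀ y ∈ s, r x y ∨ r y x) → ∃ m ∈ s, ∀ x ∈ s, r m x := by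
  refine Set.Finite.induction_on s hs ?_ ?_
  · intro h _; exact absurd rfl h.ne_empty
  · intro a s ha hsf ih _ hcomp
    rcases s.eq_empty_or_nonempty with rfl | hne
    · refine ⟨a, Set.mem_insert _ _, ?_⟩
      rintro x (rfl | hx)
      · exact href _
      · exact absurd hx (Set.notMem_empty x)
    · obtain ⟨m, hm, hle⟩ := ih hne (fun x hx y hy =>
        hcomp x (Set.mem_insert_of_mem _ hx) y (Set.mem_insert_of_mem _ hy))
      rcases hcomp a (Set.mem_insert _ _) m (Set.mem_insert_of_mem _ hm) with ham | hma
      · refine ⟨a, Set.mem_insert _ _, ?_⟩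
        rintro x (rfl | hx)
        · exact href _
        · exact htrans _ _ _ ham (hle x hx)
      · refine ⟨m, Set.mem_insert_of_mem _ hm, ?_⟩
        rintro x (rfl | hx)
        · exact hma
        · exact hle x hx

theorem enum_exists {r : W → W → Prop} (href : ∀ x, r x x)
    (htrans : ∀ x y z, r x y → r y z → r x z) :
    ∀ (n : ℕ) (s : Set W), s.Finite → s.ncard = n →
      (∀ x ∈ s, ∀ y ∈ s, r x y ∨ r y x) → ∃ l, Enum r s l := by
  intro n
  induction n using Nat.strong_induction_on with
  | _ n ih =>
    intro s hsf hcard hcomp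
    rcases s.eq_empty_or_nonempty with rfl | hne
    · exact ⟨[], List.Pairwise.nil, by simp⟩
    · obtain ⟨m, hm, hle⟩ := chain_exists_least href htrans hsf hne hcomp
      have hlt : (s \ {m}).ncard < n := hcard ▸ Set.ncard_diff_singleton_lt_of_mem hm hsf
      obtain ⟨t, ht⟩ := ih _ hlt (s \ {m}) hsf.diff rfl
        (fun x hx y hy => hcomp x hx.1 y hy.1)
      refine ⟨m :: t, List.pairwise_cons.mpr ⟨?_, ht.1⟩, ?_⟩
      · intro x hx
        have hxs := (ht.2 x).mp hx
        exact ⟨hle x hxs.1, fun h => hxs.2 (h.symm)⟩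
      · intro x
        rw [List.mem_cons, ht.2 x]
        constructor
        · rintro (rfl | h)
          · exact hm
          · exact h.1
        · intro hx
          by_cases hxm : x = m
          · exact Or.inl hxm
          · exact Or.inr ⟨hx, hxm⟩

open scoped Classical in
/-- The canonical enumeration of `{y | r y w}`. -/
noncomputable def coverList (r : W → W → Prop) (w : W) : List W :=
  if h : ∃ l, Enum r {y | r y w} l then h.choose else []

theorem coverList_enum {r : W → W → Prop} {w : W}
    (h : ∃ l, Enum r {y | r y w} l) : Enum r {y | r y w} (coverList r w) := by
  rw [coverList, dif_pos h]
  exact h.choose_spec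



section CoverToCoalg

variable {ι : Type} {A : PStr ι} {k n : ℕ} {r : A.W → A.W → Prop}

theorem GTC.refl (hc : GenTreeCover A r n) : ∀ x, r x x := by
  haveI := hc.1; exact fun x => refl_of r x

theorem GTC.trans (hc : GenTreeCover A r n) : ∀ x y z, r x y → r y z → r x z := by
  haveI := hc.1; exact fun x y z h1 h2 => Trans.trans h1 h2

theorem GTC.anti (hc : GenTreeCover A r n) : ∀ x y, r x y → r y x → x = y := by
  haveI := hc.1; exact fun x y h1 h2 => antisymm_of r h1 h2

theorem cover_Iic_comp (hc : GenTreeCover A r n) (w : A.W) :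
    ∀ x ∈ {y | r y w}, ∀ y ∈ {y | r y w}, r x y ∨ r y x :=
  fun x hx y hy => hc.2.2.1 w x y hx hy

theorem cover_Iic_finite (hc : GenTreeCover A r n) (w : A.W) : {y | r y w}.Finite := by
  have hch : IsChain r {y | r y w} := fun x hx y hy _ => cover_Iic_comp hc w x hx y hy
  have := hc.2.2.2.2.2 _ hch
  exact Set.encard_lt_top_iff.mp (lt_of_le_of_lt this (WithTop.coe_lt_top _))

theorem cover_enum (hc : GenTreeCover A r n) (w : A.W) :
    Enum r {y | r y w} (coverList r w) :=
  coverList_enum (enum_exists (GTC.refl hc) (GTC.trans hc) _ _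
    (cover_Iic_finite hc w) rfl (cover_Iic_comp hc w))

theorem cover_mem_iff (hc : GenTreeCover A r n) {w x : A.W} :
    x ∈ coverList r w ↔ r x w := (cover_enum hc w).2 x

theorem cover_ne_nil (hc : GenTreeCover A r n) (w : A.W) : coverList r w ≠ [] :=
  List.ne_nil_of_mem ((cover_mem_iff hc).mpr (GTC.refl hc w))

theorem cover_pairwise_get (hc : GenTreeCover A r n) (w : A.W)
    {i j : Fin (coverList r w).length} (hij : (i : ℕ) < (j : ℕ)) :
    r ((coverList r w).get i) ((coverList r w).get j) ∧
      (coverList r w).get i ≠ (coverList r w).get j :=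
  List.pairwise_iff_get.mp (cover_enum hc w).1 i j hij

theorem cover_head (hc : GenTreeCover A r n) (w : A.W) :
    (coverList r w).head? = some A.pt := by
  obtain ⟨a, t, hat⟩ := List.exists_cons_of_ne_nil (cover_ne_nil hc w)
  have hpt : A.pt ∈ coverList r w := (cover_mem_iff hc).mpr (hc.2.1 w)
  have hapt : a = A.pt := by
    rw [hat] at hpt
    rcases List.mem_cons.mp hpt with h | h
    · exact h.symm
    · have h2 := (List.pairwise_cons.mp (hat ▸ (cover_enum hc w).1)).1 _ h
      exact absurd (GTC.anti hc _ _ h2.1 (hc.2.1 a)) h2.2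
  rw [hat, hapt]; rfl

theorem cover_getLast (hc : GenTreeCover A r n) (w : A.W) :
    (coverList r w).getLast (cover_ne_nil hc w) = w := by
  have hne := cover_ne_nil hc w
  obtain ⟨i, hi⟩ := List.mem_iff_get.mp ((cover_mem_iff hc).mpr (GTC.refl hc w))
  rw [List.getLast_eq_getElem]
  have hlen : 0 < (coverList r w).length := List.length_pos_iff.mpr hne
  have hj : (coverList r w).length - 1 < (coverList r w).length := by omega
  have hi2 : (i : ℕ) ≤ (coverList r w).length - 1 := by
    have := i.isLt; omega
  rcases lt_or_eq_of_le hi2 with hlt | heq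
  · exfalso
    have hp := cover_pairwise_get hc w (i := i) (j := ⟨_, hj⟩) hlt
    have hmem : (coverList r w).get ⟨_, hj⟩ ∈ coverList r w := List.get_mem _ _
    have h3 := (cover_mem_iff hc).mp hmem
    rw [hi] at hp
    exact hp.2 (GTC.anti hc _ _ hp.1 h3)
  · have hfin : (⟨(coverList r w).length - 1, hj⟩ : Fin (coverList r w).length) = i := by
      apply Fin.ext
      simp only []
      omega
    calc (coverList r w)[(coverList r w).length - 1]'hj
        = (coverList r w).get ⟨(coverList r w).length - 1, hj⟩ := rfl
      _ = (coverList r w).get i := by rw [hfin]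
      _ = w := hi

theorem cover_lastW (hc : GenTreeCover A r n) (w : A.W) :
    lastW A (coverList r w) = w := by
  rw [lastW, List.getLast?_eq_getLast (cover_ne_nil hc w), Option.getD_some,
    cover_getLast hc w]

theorem cover_length_le (hc : GenTreeCover A r n) (w : A.W) :
    (coverList r w).length ≤ n := by
  classical
  have hch : IsChain r {y | r y w} := fun x hx y hy _ => cover_Iic_comp hc w x hx y hy
  have hb := hc.2.2.2.2.2 _ hch
  have hset : {y | r y w} = ↑(coverList r w).toFinset := by
    ext x
    simp only [List.coe_toFinset, Set.mem_setOf_eq]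
    exact (cover_mem_iff hc).symm
  rw [hset, Set.encard_coe_eq_coe_finsetCard,
    List.toFinset_card_of_nodup (cover_enum hc w).nodup] at hb
  exact_mod_cast hb

theorem cover_take_enum (hc : GenTreeCover A r n) (w : A.W)
    (j : Fin (coverList r w).length) :
    Enum r {y | r y ((coverList r w).get j)} ((coverList r w).take ((j : ℕ) + 1)) := by
  constructor
  · exact (cover_enum hc w).1.sublist (List.take_sublist _ _)
  · intro x
    rw [List.mem_take_iff_getElem]
    constructor
    · rintro ⟨i, hm, rfl⟩
      have hi' : i < (coverList r w).length := by omega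
      have hij : i ≤ (j : ℕ) := by omega
      rcases lt_or_eq_of_le hij with hlt | heq
      · exact Set.mem_setOf_eq ▸
          (cover_pairwise_get hc w (i := ⟨i, hi'⟩) (j := j) hlt).1
      · have : (coverList r w).get j = (coverList r w)[i] := by
          rw [List.get_eq_getElem]; congr 1; omega
        rw [Set.mem_setOf_eq, this]
        exact GTC.refl hc _
    · intro hx
      have hxw : r x w := GTC.trans hc _ _ _ hx
        ((cover_mem_iff hc).mp (List.get_mem _ _))
      obtain ⟨i, hi⟩ := List.mem_iff_get.mp ((cover_mem_iff hc).mpr hxw)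
      have hij : (i : ℕ) ≤ (j : ℕ) := by
        by_contra hgt
        push_neg at hgt
        have hp := cover_pairwise_get hc w (i := j) (j := i) hgt
        rw [hi] at hp
        exact hp.2 (GTC.anti hc _ _ hp.1 hx)
      exact ⟨i, by have := i.isLt; omega, by rw [← List.get_eq_getElem, hi]⟩

theorem cover_take_eq (hc : GenTreeCover A r n) (w : A.W)
    (j : Fin (coverList r w).length) :
    (coverList r w).take ((j : ℕ) + 1) = coverList r ((coverList r w).get j) :=
  enum_unique (GTC.anti hc) (cover_take_enum hc w j)
    (cover_enum hc ((coverList r w).get j))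

theorem cover_pt (hc : GenTreeCover A r n) : coverList r A.pt = [A.pt] := by
  refine enum_unique (GTC.anti hc) (cover_enum hc A.pt) ⟨?_, ?_⟩
  · simp
  · intro x
    simp only [List.mem_singleton, Set.mem_setOf_eq]
    constructor
    · rintro rfl; exact GTC.refl hc _
    · intro h; exact GTC.anti hc _ _ h (hc.2.1 x)

theorem cover_prefix (hc : GenTreeCover A r n) {x w : A.W} (h : r x w) :
    coverList r x <+: coverList r w := by
  obtain ⟨j, hj⟩ := List.mem_iff_get.mp ((cover_mem_iff hc).mpr h)
  rw [← hj, ← cover_take_eq hc w j]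
  exact List.take_prefix _ _

theorem cover_isCoalg (hc : GenTreeCover A r (k + 1)) : IsCoalg A k (coverList r) := by
  refine ⟨?_, cover_pt hc, ?_, ?_, cover_lastW hc, ?_⟩
  · intro w
    refine ⟨cover_ne_nil hc w, cover_head hc w, cover_length_le hc w, ?_⟩
    intro j hj
    have hx : (coverList r w).get j ≠ A.pt := by
      have h0 : (0 : ℕ) < (coverList r w).length := List.length_pos_iff.mpr (cover_ne_nil hc w)
      have hp := cover_pairwise_get hc w (i := ⟨0, h0⟩) (j := j) hj
      have hget0 : (coverList r w).get ⟨0, h0⟩ = A.pt := by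
        rw [List.get_mk_zero]
        have h := cover_head hc w
        rw [List.head?_eq_head (cover_ne_nil hc w)] at h
        exact Option.some.inj h
      intro hcon
      exact hp.2 (by rw [hget0, hcon])
    obtain ⟨y, hyx, hyne, hyE⟩ := hc.2.2.2.2.1 _ hx
    have hyw : r y w := GTC.trans hc _ _ _ hyx
      ((cover_mem_iff hc).mp (List.get_mem _ _))
    obtain ⟨i, hi⟩ := List.mem_iff_get.mp ((cover_mem_iff hc).mpr hyw)
    have hij : (i : ℕ) < (j : ℕ) := by
      rcases lt_trichotomy (i : ℕ) (j : ℕ) with h | h | h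
      · exact h
      · exfalso; apply hyne; rw [← hi]; congr 1; exact Fin.ext h
      · exfalso
        have hp := cover_pairwise_get hc w (i := j) (j := i) h
        rw [hi] at hp
        exact hp.2 (GTC.anti hc _ _ hp.1 hyx)
    exact ⟨i, hij, by rw [hi]; exact hyE⟩
  · intro i w hp
    exact ⟨cover_ne_nil hc w, by rw [cover_lastW hc w]; exact hp⟩
  · intro w w' hE
    refine ⟨?_, cover_ne_nil hc w, cover_ne_nil hc w', ?_⟩
    · by_cases hww : w = w'
      · subst hww; exact Or.inl (List.prefix_refl _)
      · rcases hc.2.2.2.1 w w' hww (Or.inl hE) with h | h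
        · exact Or.inl (cover_prefix hc h)
        · exact Or.inr (cover_prefix hc h)
    · rw [cover_lastW hc w, cover_lastW hc w']; exact hE
  · intro w j
    exact cover_take_eq hc w j

end CoverToCoalg

section CoalgToCover

variable {ι : Type} {A : PStr ι} {k : ℕ} {α : A.W → List A.W}

theorem coalg_ne_nil (hα : IsCoalg A k α) (w : A.W) : α w ≠ [] := (hα.1 w).1

theorem coalg_lastW (hα : IsCoalg A k α) (w : A.W) : lastW A (α w) = w :=
  hα.2.2.2.2.1 w

theorem coalg_inj (hα : IsCoalg A k α) {x y : A.W} (h : α x = α y) : x = y := by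
  rw [← coalg_lastW hα x, ← coalg_lastW hα y, h]

theorem coalg_mem_self (hα : IsCoalg A k α) (w : A.W) : w ∈ α w := by
  have h := coalg_lastW hα w
  rw [lastW, List.getLast?_eq_getLast (coalg_ne_nil hα w), Option.getD_some] at h
  conv_rhs => rw [← h]
  exact List.getLast_mem _

theorem coalg_cons (hα : IsCoalg A k α) (w : A.W) :
    ∃ t, α w = A.pt :: t := by
  obtain ⟨a, t, hat⟩ := List.exists_cons_of_ne_nil (coalg_ne_nil hα w)
  have hh := (hα.1 w).2.1
  rw [hat] at hh ⊢
  simp only [List.head?_cons, Option.some.injEq] at hh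
  exact ⟨t, by rw [hh]⟩

theorem coalg_take (hα : IsCoalg A k α) (w : A.W) (j : Fin (α w).length) :
    (α w).take ((j : ℕ) + 1) = α ((α w).get j) := hα.2.2.2.2.2 w j

theorem coalg_take_len (hα : IsCoalg A k α) (w : A.W) (j : Fin (α w).length) :
    (α ((α w).get j)).length = (j : ℕ) + 1 := by
  rw [← coalg_take hα w j, List.length_take]
  have := j.isLt
  omega

theorem coalg_get_ne (hα : IsCoalg A k α) (w : A.W) {i j : Fin (α w).length}
    (hij : (i : ℕ) < (j : ℕ)) : (α w).get i ≠ (α w).get j := by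
  intro h
  have h1 := coalg_take_len hα w i
  have h2 := coalg_take_len hα w j
  rw [h] at h1
  omega

theorem coalg_get_prefix (hα : IsCoalg A k α) (w : A.W) {i j : Fin (α w).length}
    (hij : (i : ℕ) ≤ (j : ℕ)) : α ((α w).get i) <+: α ((α w).get j) := by
  rw [← coalg_take hα w i, ← coalg_take hα w j]
  exact List.take_prefix_take_left (by omega)

theorem coalg_prefix_iff (hα : IsCoalg A k α) {x w : A.W} :
    α x <+: α w ↔ x ∈ α w := by
  constructor
  · intro h
    exact h.subset (coalg_mem_self hα x)
  · intro h
    obtain ⟨i, hi⟩ := List.mem_iff_get.mp h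
    have := coalg_take hα w i
    rw [hi] at this
    rw [← this]
    exact List.take_prefix _ _

theorem coalg_cover (hα : IsCoalg A k α) :
    GenTreeCover A (fun x y => α x <+: α y) (k + 1) := by
  have hanti : ∀ x y : A.W, α x <+: α y → α y <+: α x → x = y := by
    intro x y h1 h2
    exact coalg_inj hα (h1.eq_of_length_le h2.length_le)
  refine ⟨?_, ?_, ?_, ?_, ?_, ?_⟩
  · exact { refl := fun x => List.prefix_refl _,
            trans := fun x y z h1 h2 => h1.trans h2,
            antisymm := hanti }
  · intro x
    rw [hα.2.1]
    obtain ⟨t, ht⟩ := coalg_cons hα x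
    rw [ht]
    exact ⟨t, rfl⟩
  · intro x y z hy hz
    exact List.prefix_or_prefix_of_prefix hy hz
  · intro x y hxy hE
    rcases hE with h | h
    · rcases (hα.2.2.2.1 x y h).1 with h' | h'
      · exact Or.inl h'
      · exact Or.inr h'
    · rcases (hα.2.2.2.1 y x h).1 with h' | h'
      · exact Or.inr h'
      · exact Or.inl h'
  · intro x hx
    obtain ⟨t, ht⟩ := coalg_cons hα x
    have htne : t ≠ [] := by
      rintro rfl
      apply hx
      apply coalg_inj hα
      rw [ht, hα.2.1]
    have hlen : 2 ≤ (α x).length := by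
      rw [ht]
      cases t with
      | nil => exact absurd rfl htne
      | cons b t' => simp
    have hj : (α x).length - 1 < (α x).length := by omega
    have h2 : α ((α x).get ⟨(α x).length - 1, hj⟩) = α x := by
      rw [← coalg_take hα x ⟨(α x).length - 1, hj⟩]
      exact List.take_of_length_le (show (α x).length ≤ (α x).length - 1 + 1 by omega)
    have h3 : (α x).get ⟨(α x).length - 1, hj⟩ = x := coalg_inj hα h2
    obtain ⟨i, hilt, hiE⟩ := (hα.1 x).2.2.2 ⟨(α x).length - 1, hj⟩
      (show (0:ℕ) < (α x).length - 1 by omega)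
    have hilt' : (i : ℕ) < (α x).length - 1 := hilt
    rw [h3] at hiE
    refine ⟨(α x).get i, ?_, ?_, hiE⟩
    · show α ((α x).get i) <+: α x
      rw [← coalg_take hα x i]
      exact List.take_prefix _ _
    · intro hcon
      have h1 := coalg_take_len hα x i
      rw [hcon] at h1
      omega
  · intro C hC
    have hinj : Set.InjOn (fun x => (α x).length) C := by
      intro x hx y hy hxy
      by_cases hne : x = y
      · exact hne
      · rcases hC hx hy hne with h | h
        · exact coalg_inj hα (h.eq_of_length hxy)
        · exact (coalg_inj hα (h.eq_of_length hxy.symm)).symm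
    have himg : (fun x => (α x).length) '' C ⊆ ↑(Finset.Icc 1 (k + 1)) := by
      rintro m ⟨x, _, rfl⟩
      simp only [Finset.coe_Icc, Set.mem_Icc]
      exact ⟨List.length_pos_iff.mpr (coalg_ne_nil hα x), (hα.1 x).2.2.1⟩
    calc C.encard = ((fun x => (α x).length) '' C).encard := (hinj.encard_image).symm
      _ ≤ (↑(Finset.Icc 1 (k + 1)) : Set ℕ).encard := Set.encard_mono himg
      _ = ((Finset.Icc 1 (k + 1)).card : ℕ∞) := Set.encard_coe_eq_coe_finsetCard _
      _ = ((k + 1 : ℕ) : ℕ∞) := by rw [Nat.card_Icc]; norm_num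

end CoalgToCover

section Main

variable {ι : Type} {A : PStr ι} {k : ℕ} {α : A.W → List A.W}

theorem coalg_enum (hα : IsCoalg A k α) (w : A.W) :
    Enum (fun x y => α x <+: α y) {y | α y <+: α w} (α w) := by
  constructor
  · rw [List.pairwise_iff_get]
    intro i j hij
    exact ⟨coalg_get_prefix hα w (le_of_lt hij), coalg_get_ne hα w hij⟩
  · intro x
    exact (coalg_prefix_iff hα).symm

theorem coalg_left_inv (hα : IsCoalg A k α) :
    coverList (fun x y => α x <+: α y) = α := by
  funext w
  exact enum_unique (GTC.anti (coalg_cover hα))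
    (cover_enum (coalg_cover hα) w) (coalg_enum hα w)

theorem cover_right_inv {r : A.W → A.W → Prop} (hc : GenTreeCover A r (k + 1)) :
    (fun x y => coverList r x <+: coverList r y) = r := by
  funext x y
  apply propext
  constructor
  · intro h
    exact (cover_mem_iff hc).mp
      (h.subset ((cover_mem_iff hc).mpr (GTC.refl hc x)))
  · intro h
    exact cover_prefix hc h

end Main

theorem coalgebras_biject_with_generated_tree_covers (A : PStr ι) (k : ℕ) (hk : 0 < k) :
    Nonempty ({α : A.W → List A.W // IsCoalg A k α} ≃
      {r : A.W → A.W → Prop // GenTreeCover A r (k + 1)}) := by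
  exact ⟨{ toFun := fun a => ⟨fun x y => a.1 x <+: a.1 y, coalg_cover a.2⟩,
           invFun := fun rr => ⟨coverList rr.1, cover_isCoalg rr.2⟩,
           left_inv := fun a => Subtype.ext (coalg_left_inv a.2),
           right_inv := fun rr => Subtype.ext (cover_right_inv rr.2) }⟩

end PStr
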